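/- Any scale (finite set of positive reals) containing two elements whose ratio is irrational is not a complete difference tone scale. -/

import Mathlib

/-- A ℚ-linear functional separating two ℚ-linearly independent reals. -/
lemma exists_functional_aux {x y : ℝ} (hirr : Irrational (x / y)) (hy0 : y ≠ 0) :
    ∃ φ : ℝ →ₗ[ℚ] ℚ, φ x = 1 ∧ φ y = 0 := by
  have hx0 : x ≠ 0 := by
    intro h
    rw [h, zero_div] at hirr
    exact hirr ⟨0, by norm_num⟩
  have hxy : x ≠ y := by
    intro h
    rw [h, div_self hy0] at hirr
    exact hirr ⟨1, by norm_num⟩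
  have hli : LinearIndepOn ℚ id ({x, y} : Set ℝ) := by
    apply linearIndepOn_id_pair hx0
    intro a ha
    apply hirr
    have ha0 : a ≠ 0 := by rintro rfl; simp at ha; exact hy0 ha.symm
    refine ⟨1 / a, ?_⟩
    rw [← ha]
    push_cast
    field_simp [Rat.smul_def]
    exact Rat.smul_def a x
  let B := Module.Basis.extend hli
  have hxmem : x ∈ hli.extend (Set.subset_univ _) :=
    hli.subset_extend _ (by simp)
  have hymem : y ∈ hli.extend (Set.subset_univ _) :=
    hli.subset_extend _ (by simp)
  refine ⟨B.coord ⟨x, hxmem⟩, ?_, ?_⟩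
  · have h := Module.Basis.repr_self_apply B ⟨x, hxmem⟩ ⟨x, hxmem⟩
    rw [Module.Basis.extend_apply_self] at h
    rw [Module.Basis.coord_apply, h]
    simp
  · have h := Module.Basis.repr_self_apply B ⟨y, hymem⟩ ⟨x, hxmem⟩
    rw [Module.Basis.extend_apply_self] at h
    rw [Module.Basis.coord_apply, h]
    rw [if_neg]
    intro hc
    exact absurd (congrArg Subtype.val hc) (Ne.symm hxy)

/-- A scale containing an irrational interval is not a complete difference
tone scale. -/
theorem irrational_interval_not_complete
    (S : Finset ℝ) (hpos : ∀ x ∈ S, 0 < x)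
    (x y : ℝ) (hx : x ∈ S) (hy : y ∈ S) (hirr : Irrational (x / y)) :
    ¬ (∀ a ∈ S, ∀ b ∈ S, b < a → ∃ z ∈ S, ∃ t : ℤ, a - b = 2 ^ t * z) := by
  intro hcomp
  have hy0 : (0:ℝ) < y := hpos y hy
  have hx0 : (0:ℝ) < x := hpos x hx
  obtain ⟨φ, hφx, hφy⟩ := exists_functional_aux hirr (ne_of_gt hy0)
  set g : ℝ → ℝ := fun s => ((φ s : ℚ) : ℝ) with hg
  -- key consequence of completeness: slopes of differences are slopes of elements
  have key : ∀ a ∈ S, ∀ b ∈ S, b < a →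
      ∃ z ∈ S, g a - g b = (g z / z) * (a - b) := by
    intro a ha b hb hba
    obtain ⟨z, hzS, t, ht⟩ := hcomp a ha b hb hba
    have hz0 : (0:ℝ) < z := hpos z hzS
    refine ⟨z, hzS, ?_⟩
    have hsmul : a - b = ((2:ℚ)^t : ℚ) • z := by
      rw [Rat.smul_def, ht]; push_cast; ring
    have hφ : φ a - φ b = (2:ℚ)^t * φ z := by
      have := φ.map_smul ((2:ℚ)^t) z
      rw [← hsmul, map_sub] at this
      simpa [smul_eq_mul] using this
    have h2t : ((2:ℝ)^t) = (a - b) / z := by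
      rw [ht]; field_simp
    have : g a - g b = (2:ℝ)^t * g z := by
      have hc := congrArg (fun q : ℚ => (q : ℝ)) hφ
      push_cast at hc
      simpa [hg] using hc
    rw [this, h2t]; field_simp
  -- elements of extremal slope
  obtain ⟨a, haS, hamax⟩ := S.exists_max_image (fun s => g s / s) ⟨x, hx⟩
  obtain ⟨b, hbS, hbmin⟩ := S.exists_min_image (fun s => g s / s) ⟨x, hx⟩
  have ha0 : (0:ℝ) < a := hpos a haS
  have hb0 : (0:ℝ) < b := hpos b hbS
  have hgx : g x / x = 1 / x := by rw [hg]; simp [hφx]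
  have hgy : g y / y = 0 := by rw [hg]; simp [hφy]
  have hax : 1 / x ≤ g a / a := hgx ▸ hamax x hx
  have hby : g b / b ≤ 0 := hgy ▸ hbmin y hy
  have hab : g b / b < g a / a := lt_of_le_of_lt hby (lt_of_lt_of_le (by positivity) hax)
  rcases lt_trichotomy a b with h | h | h
  · obtain ⟨z, hzS, heq⟩ := key b hbS a haS h
    have hz0 : (0:ℝ) < z := hpos z hzS
    have h1 : g b / b ≤ g z / z := hbmin z hzS
    have e1 : g a = (g a / a) * a := by field_simp
    have e2 : g b = (g b / b) * b := by field_simp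
    nlinarith [mul_pos hb0 (sub_pos.mpr hab), mul_lt_mul_of_pos_right hab ha0,
      mul_le_mul_of_nonneg_right h1 (le_of_lt (sub_pos.mpr h))]
  · exact absurd (h ▸ hab) (lt_irrefl _)
  · obtain ⟨z, hzS, heq⟩ := key a haS b hbS h
    have hz0 : (0:ℝ) < z := hpos z hzS
    have h1 : g z / z ≤ g a / a := hamax z hzS
    have e1 : g a = (g a / a) * a := by field_simp
    have e2 : g b = (g b / b) * b := by field_simp
    nlinarith [mul_lt_mul_of_pos_right hab hb0,
      mul_le_mul_of_nonneg_right h1 (le_of_lt (sub_pos.mpr h))]
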